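/- If κ is an infinite cardinal with κ^{<κ} = κ, then there is a universal graph on κ, i.e. a graph with vertex set κ containing an isomorphic induced copy of every graph with vertex set κ. -/

import Mathlib

open Cardinal

/-- If `κ` is an infinite cardinal with `κ^{<κ} = κ`, then there is a universal graph on `κ`:
a graph with vertex set (of cardinality) `κ` containing an isomorphic induced copy of every
graph with vertex set `κ`. -/
theorem stmt2 (κ : Cardinal.{u}) (hκ : ℵ₀ ≤ κ) (hpow : κ ^< κ = κ)
    (V : Type u) (hV : #V = κ) :
    ∃ H : SimpleGraph V, ∀ G : SimpleGraph V, Nonempty (G ↪g H) := by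
  classical
  set I : Type u := κ.ord.ToType with hI
  have hmkI : #I = κ := Cardinal.mk_ord_toType κ
  -- the universal graph on W
  set W : Type u := Σ x : I, (Set.Iio x → Prop) with hW
  have hsymm : Symmetric fun a b : W =>
      (∃ h : a.1 < b.1, b.2 ⟨a.1, h⟩) ∨ ∃ h : b.1 < a.1, a.2 ⟨b.1, h⟩ := by
    intro a b h; exact h.symm
  set H' : SimpleGraph W :=
    { Adj := fun a b => (∃ h : a.1 < b.1, b.2 ⟨a.1, h⟩) ∨ ∃ h : b.1 < a.1, a.2 ⟨b.1, h⟩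
      symm := ⟨fun a b h => hsymm h⟩
      loopless := ⟨by
        rintro a (⟨h, _⟩ | ⟨h, _⟩) <;> exact lt_irrefl _ h⟩ } with hH'
  -- cardinality of W
  have h2κ : (2 : Cardinal) ≤ κ := (Cardinal.nat_lt_aleph0 2).le.trans hκ
  have hWκ : #W = κ := by
    apply le_antisymm
    · rw [hW, Cardinal.mk_sigma]
      calc (Cardinal.sum fun x : I => #(Set.Iio x → Prop))
          ≤ Cardinal.sum fun _ : I => κ := by
            apply Cardinal.sum_le_sum
            intro x
            have h1 : #(Set.Iio x → Prop) = 2 ^ #(Set.Iio x) := by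
              simp [Cardinal.mk_arrow]
            rw [h1]
            calc (2 : Cardinal) ^ #(Set.Iio x) ≤ κ ^ #(Set.Iio x) :=
                  Cardinal.power_le_power_right h2κ
              _ ≤ κ ^< κ := Cardinal.le_powerlt κ (Cardinal.mk_Iio_ord_toType x)
              _ = κ := hpow
        _ = #I * κ := by rw [Cardinal.sum_const']
        _ = κ := by rw [hmkI, Cardinal.mul_eq_self hκ]
    · rw [← hmkI]
      exact Cardinal.mk_le_of_injective (f := fun x : I => (⟨x, fun _ => False⟩ : W))
        (fun a b h => by simpa using congrArg Sigma.fst h)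
  -- transport to V
  have hWV : #W = #V := by rw [hWκ, hV]
  obtain ⟨e⟩ := Cardinal.eq.mp hWV
  refine ⟨H'.comap e.symm.toEmbedding, fun G => ?_⟩
  -- enumeration of V
  obtain ⟨v⟩ := Cardinal.eq.mp (hmkI.trans hV.symm)
  -- the embedding of G into H'
  have hf : ∀ a b : V, H'.Adj ⟨v.symm a, fun p => G.Adj (v p.1) a⟩
      ⟨v.symm b, fun p => G.Adj (v p.1) b⟩ ↔ G.Adj a b := by
    intro a b
    constructor
    · rintro (⟨h, hadj⟩ | ⟨h, hadj⟩) <;> simp only [Equiv.apply_symm_apply] at hadj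
      · exact hadj
      · exact hadj.symm
    · intro hab
      have hne : v.symm a ≠ v.symm b := fun h => G.ne_of_adj hab (v.symm.injective h)
      rcases hne.lt_or_gt with h | h
      · exact Or.inl ⟨h, by simpa using hab⟩
      · exact Or.inr ⟨h, by simpa using hab.symm⟩
  have femb : G ↪g H' :=
    { toFun := fun a => ⟨v.symm a, fun p => G.Adj (v p.1) a⟩
      inj' := fun a b h => v.symm.injective (congrArg Sigma.fst h)
      map_rel_iff' := fun {a b} => hf a b }
  exact ⟨((SimpleGraph.Iso.comap e.symm H').symm.toEmbedding).comp femb⟩
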